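/- Let k ≥ 1, let G be a k-edge-connected finite simple graph on V, and fix a root r ∈ V. Let u and v be snug vertices with snug shores (S₁ᵘ, S₂ᵘ) and (S₁ᵛ, S₂ᵛ) respectively such that S₂ᵘ = S₁ᵛ. If S ⊆ V∖{r} is a k-cut such that exactly one of u, v belongs to S, then S = S₂ᵘ. (That is, an arc (u, v) of the chain graph crosses no k-cut other than S₂ᵘ = S₁ᵛ and its complement.) -/

import Mathlib

open Finset

variable {V : Type*} [Fintype V] [DecidableEq V]

/-- `Crosses S e`: exactly one endpoint of the edge/link `e` lies in `S`. -/
def Crosses (S : Finset V) (e : Sym2 V) : Prop :=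
  ∃ x y : V, e = s(x, y) ∧ x ∈ S ∧ y ∉ S

instance (S : Finset V) : DecidablePred (Crosses S) := fun e =>
  decidable_of_iff (∃ x y : V, e = s(x, y) ∧ x ∈ S ∧ y ∉ S) Iff.rfl

/-- The cut `δ(S)`: edges of `G` with exactly one endpoint in `S`. -/
def cutEdges (G : SimpleGraph V) [DecidableRel G.Adj] (S : Finset V) :
    Finset (Sym2 V) :=
  G.edgeFinset.filter fun e => Crosses S e

/-- `G` is `k`-edge-connected: every nonempty proper cut has at least `k` crossing edges. -/
def EdgeConnected (G : SimpleGraph V) [DecidableRel G.Adj] (k : ℕ) : Prop :=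
  ∀ S : Finset V, S.Nonempty → S ≠ Finset.univ → k ≤ (cutEdges G S).card

/-- `S` is a `k`-cut: a nonempty proper vertex set with exactly `k` crossing edges. -/
def IsCut (G : SimpleGraph V) [DecidableRel G.Adj] (k : ℕ) (S : Finset V) : Prop :=
  S.Nonempty ∧ S ≠ Finset.univ ∧ (cutEdges G S).card = k

/-- `(S₁, S₂)` are snug shores for `v` (with respect to the root `r`):
two `k`-cuts avoiding `r` with `v ∉ S₁` and `S₂ = S₁ ∪ {v}`. -/
def SnugShores (G : SimpleGraph V) [DecidableRel G.Adj] (k : ℕ) (r v : V)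
    (S₁ S₂ : Finset V) : Prop :=
  IsCut G k S₁ ∧ IsCut G k S₂ ∧ r ∉ S₁ ∧ r ∉ S₂ ∧ v ∉ S₁ ∧ S₂ = insert v S₁

/-- `v` is a snug vertex (with respect to the root `r`). -/
def Snug (G : SimpleGraph V) [DecidableRel G.Adj] (k : ℕ) (r v : V) : Prop :=
  v ≠ r ∧ k + 1 ≤ G.degree v ∧ ∃ S₁ S₂ : Finset V, SnugShores G k r v S₁ S₂

/-- A snug chain: snug vertices `u 0, …, u t` together with `k`-cuts
`S 0, …, S (t+1)` such that `(S i, S (i+1))` are snug shores for `u i`. -/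
def IsSnugChain (G : SimpleGraph V) [DecidableRel G.Adj] (k : ℕ) (r : V)
    (t : ℕ) (u : ℕ → V) (S : ℕ → Finset V) : Prop :=
  ∀ i ≤ t, Snug G k r (u i) ∧ SnugShores G k r (u i) (S i) (S (i + 1))

set_option linter.unusedSectionVars false

def Across (X Y : Finset V) (e : Sym2 V) : Prop :=
  ∃ x y : V, e = s(x, y) ∧ x ∈ X ∧ y ∈ Y
instance (X Y : Finset V) : DecidablePred (Across X Y) := fun e =>
  decidable_of_iff (∃ x y : V, e = s(x, y) ∧ x ∈ X ∧ y ∈ Y) Iff.rfl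
def eAcross (G : SimpleGraph V) [DecidableRel G.Adj] (X Y : Finset V) : ℕ :=
  (G.edgeFinset.filter fun e => Across X Y e).card
lemma crosses_iff (S : Finset V) (x y : V) :
    Crosses S s(x, y) ↔ (x ∈ S ∧ y ∉ S) ∨ (y ∈ S ∧ x ∉ S) := by
  constructor
  · rintro ⟨a, b, hab, ha, hb⟩
    rw [Sym2.eq_iff] at hab
    rcases hab with ⟨rfl, rfl⟩ | ⟨rfl, rfl⟩
    · exact Or.inl ⟨ha, hb⟩
    · exact Or.inr ⟨ha, hb⟩
  · rintro (⟨h1, h2⟩ | ⟨h1, h2⟩)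
    exacts [⟨x, y, rfl, h1, h2⟩, ⟨y, x, Sym2.eq_swap.symm, h1, h2⟩]
lemma across_iff (X Y : Finset V) (x y : V) :
    Across X Y s(x, y) ↔ (x ∈ X ∧ y ∈ Y) ∨ (y ∈ X ∧ x ∈ Y) := by
  constructor
  · rintro ⟨a, b, hab, ha, hb⟩
    rw [Sym2.eq_iff] at hab
    rcases hab with ⟨rfl, rfl⟩ | ⟨rfl, rfl⟩
    · exact Or.inl ⟨ha, hb⟩
    · exact Or.inr ⟨ha, hb⟩
  · rintro (⟨h1, h2⟩ | ⟨h1, h2⟩)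
    exacts [⟨x, y, rfl, h1, h2⟩, ⟨y, x, Sym2.eq_swap.symm, h1, h2⟩]
lemma eAcross_symm (G : SimpleGraph V) [DecidableRel G.Adj] (X Y : Finset V) :
    eAcross G X Y = eAcross G Y X := by
  unfold eAcross
  congr 1
  apply Finset.filter_congr
  intro e he
  induction e using Sym2.ind with
  | _ x y => rw [across_iff, across_iff]; tauto
lemma eAcross_mono (G : SimpleGraph V) [DecidableRel G.Adj] {X X' Y Y' : Finset V}
    (hX : X ⊆ X') (hY : Y ⊆ Y') : eAcross G X Y ≤ eAcross G X' Y' := by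
  apply Finset.card_le_card
  apply Finset.monotone_filter_right
  rintro e - ⟨x, y, hxy, hx, hy⟩
  exact ⟨x, y, hxy, hX hx, hY hy⟩
lemma cut_union_disjoint (G : SimpleGraph V) [DecidableRel G.Adj] (X Y : Finset V)
    (h : Disjoint X Y) :
    (cutEdges G (X ∪ Y)).card + 2 * eAcross G X Y
      = (cutEdges G X).card + (cutEdges G Y).card := by
  unfold cutEdges eAcross
  simp only [Finset.card_filter, Finset.mul_sum, ← Finset.sum_add_distrib]
  apply Finset.sum_congr rfl
  intro e he
  induction e using Sym2.ind with
  | _ x y =>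
    have hd := Finset.disjoint_left.mp h
    simp only [crosses_iff, across_iff]
    by_cases h1 : x ∈ X <;> by_cases h2 : x ∈ Y <;> by_cases h3 : y ∈ X <;>
      by_cases h4 : y ∈ Y <;>
      simp [Finset.mem_union, h1, h2, h3, h4] <;>
      first
        | omega
        | (exact absurd h2 (hd h1))
        | (exact absurd h4 (hd h3))
lemma cut_submod (G : SimpleGraph V) [DecidableRel G.Adj] (S A : Finset V) :
    (cutEdges G S).card + (cutEdges G A).card
      = (cutEdges G (S ∩ A)).card + (cutEdges G (S ∪ A)).card
        + 2 * eAcross G (S \ A) (A \ S) := by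
  unfold cutEdges eAcross
  simp only [Finset.card_filter, Finset.mul_sum, ← Finset.sum_add_distrib]
  apply Finset.sum_congr rfl
  intro e he
  induction e using Sym2.ind with
  | _ x y =>
    simp only [crosses_iff, across_iff]
    by_cases h1 : x ∈ S <;> by_cases h2 : x ∈ A <;> by_cases h3 : y ∈ S <;>
      by_cases h4 : y ∈ A <;>
      simp [Finset.mem_union, Finset.mem_inter, Finset.mem_sdiff, h1, h2, h3, h4]
lemma cut_posimod (G : SimpleGraph V) [DecidableRel G.Adj] (S A : Finset V) :
    (cutEdges G S).card + (cutEdges G A).card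
      = (cutEdges G (S \ A)).card + (cutEdges G (A \ S)).card
        + 2 * eAcross G (S ∩ A) (univ \ (S ∪ A)) := by
  unfold cutEdges eAcross
  simp only [Finset.card_filter, Finset.mul_sum, ← Finset.sum_add_distrib]
  apply Finset.sum_congr rfl
  intro e he
  induction e using Sym2.ind with
  | _ x y =>
    simp only [crosses_iff, across_iff]
    by_cases h1 : x ∈ S <;> by_cases h2 : x ∈ A <;> by_cases h3 : y ∈ S <;>
      by_cases h4 : y ∈ A <;>
      simp [Finset.mem_union, Finset.mem_inter, Finset.mem_sdiff, h1, h2, h3, h4]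
lemma eAcross_union_right (G : SimpleGraph V) [DecidableRel G.Adj]
    {X Y Y' : Finset V} (hYY : Disjoint Y Y') (hXY : Disjoint X Y) (hXY' : Disjoint X Y') :
    eAcross G X (Y ∪ Y') = eAcross G X Y + eAcross G X Y' := by
  unfold eAcross
  simp only [Finset.card_filter, ← Finset.sum_add_distrib]
  apply Finset.sum_congr rfl
  intro e he
  induction e using Sym2.ind with
  | _ x y =>
    have d1 := Finset.disjoint_left.mp hYY
    have d2 := Finset.disjoint_left.mp hXY
    have d3 := Finset.disjoint_left.mp hXY'
    simp only [across_iff]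
    by_cases h1 : x ∈ X <;> by_cases h2 : x ∈ Y <;> by_cases h3 : x ∈ Y' <;>
      by_cases h4 : y ∈ X <;> by_cases h5 : y ∈ Y <;> by_cases h6 : y ∈ Y' <;>
      simp [Finset.mem_union, h1, h2, h3, h4, h5, h6] <;>
      first
        | omega
        | (exact absurd h2 (d2 h1)) | (exact absurd h3 (d3 h1))
        | (exact absurd h5 (d2 h4)) | (exact absurd h6 (d3 h4))
        | (exact absurd h3 (d1 h2)) | (exact absurd h6 (d1 h5))
lemma cut_eq_eAcross_compl (G : SimpleGraph V) [DecidableRel G.Adj] (T : Finset V) :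
    (cutEdges G T).card = eAcross G T (univ \ T) := by
  unfold cutEdges eAcross
  congr 1
  apply Finset.filter_congr
  intro e he
  induction e using Sym2.ind with
  | _ x y =>
    simp only [crosses_iff, across_iff]
    simp only [Finset.mem_sdiff, Finset.mem_univ, true_and]
lemma cut_singleton (G : SimpleGraph V) [DecidableRel G.Adj] (x : V) :
    (cutEdges G {x}).card = G.degree x := by
  rw [← SimpleGraph.card_incidenceFinset_eq_degree]
  congr 1
  unfold cutEdges
  ext e
  induction e using Sym2.ind with
  | _ a b =>
    rw [SimpleGraph.mem_incidenceFinset, SimpleGraph.mk'_mem_incidenceSet_iff,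
      Finset.mem_filter, SimpleGraph.mem_edgeFinset, SimpleGraph.mem_edgeSet, crosses_iff]
    constructor
    · rintro ⟨hadj, (⟨h1, h2⟩ | ⟨h1, h2⟩)⟩ <;>
        simp only [Finset.mem_singleton] at h1 h2 <;>
        exact ⟨hadj, by tauto⟩
    · rintro ⟨hadj, (h | h)⟩
      · subst h
        exact ⟨hadj, Or.inl ⟨Finset.mem_singleton_self _, by simp [hadj.ne']⟩⟩
      · subst h
        exact ⟨hadj, Or.inr ⟨Finset.mem_singleton_self _, by simp [hadj.ne]⟩⟩
lemma cut_split3 (G : SimpleGraph V) [DecidableRel G.Adj] (T P Q R : Finset V)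
    (hu : univ \ T = P ∪ (Q ∪ R)) (hPQ : Disjoint P Q) (hPR : Disjoint P R)
    (hQR : Disjoint Q R) :
    (cutEdges G T).card = eAcross G T P + (eAcross G T Q + eAcross G T R) := by
  have hsub : ∀ a, a ∈ P ∪ (Q ∪ R) → a ∉ T := by
    intro a ha
    rw [← hu] at ha
    exact (Finset.mem_sdiff.mp ha).2
  have hTP : Disjoint T P := Finset.disjoint_right.mpr
    fun {a} ha => hsub a (Finset.mem_union_left _ ha)
  have hTQ : Disjoint T Q := Finset.disjoint_right.mpr
    fun {a} ha => hsub a (Finset.mem_union_right _ (Finset.mem_union_left _ ha))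
  have hTR : Disjoint T R := Finset.disjoint_right.mpr
    fun {a} ha => hsub a (Finset.mem_union_right _ (Finset.mem_union_right _ ha))
  rw [cut_eq_eAcross_compl, hu,
    eAcross_union_right G (Finset.disjoint_union_right.mpr ⟨hPQ, hPR⟩) hTP
      (Finset.disjoint_union_right.mpr ⟨hTQ, hTR⟩),
    eAcross_union_right G hQR hTQ hTR]


set_option maxHeartbeats 2000000 in
/-- An arc `(u, v)` of the chain graph crosses no `k`-cut `S ⊆ V∖{r}` other than
`S₂ᵘ = S₁ᵛ`: if exactly one of `u`, `v` lies in such a `k`-cut `S`, then `S = S₂ᵘ`. -/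
theorem chain_arc_crosses_only_shared_shore
    (k : ℕ) (hk : 1 ≤ k) (G : SimpleGraph V) [DecidableRel G.Adj]
    (hG : EdgeConnected G k) (r u v : V)
    (hu : Snug G k r u) (hv : Snug G k r v)
    (S₁u S₂u S₁v S₂v : Finset V)
    (hsu : SnugShores G k r u S₁u S₂u) (hsv : SnugShores G k r v S₁v S₂v)
    (heq : S₂u = S₁v)
    (S : Finset V) (hS : IsCut G k S) (hrS : r ∉ S)
    (hxor : (u ∈ S ∧ v ∉ S) ∨ (u ∉ S ∧ v ∈ S)) :
    S = S₂u := by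
  obtain ⟨hunr, hudeg, -⟩ := hu
  obtain ⟨hvnr, hvdeg, -⟩ := hv
  obtain ⟨hc1u, hc2u, hr1u, hr2u, hu1, hiu⟩ := hsu
  obtain ⟨hc1v, hc2v, hr1v, hr2v, hv1, hiv⟩ := hsv
  have dS : (cutEdges G S).card = k := hS.2.2
  have dA : (cutEdges G S₂u).card = k := hc2u.2.2
  have d1u : (cutEdges G S₁u).card = k := hc1u.2.2
  have dB : (cutEdges G S₂v).card = k := hc2v.2.2
  have hvA : v ∉ S₂u := heq ▸ hv1
  have huA : u ∈ S₂u := hiu ▸ Finset.mem_insert_self u S₁u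
  have hB : S₂v = insert v S₂u := by rw [hiv, heq]
  have lb : ∀ T : Finset V, T.Nonempty → r ∉ T → k ≤ (cutEdges G T).card :=
    fun T h1 h2 => hG T h1 fun h => h2 (h.symm ▸ Finset.mem_univ r)
  have hdegu : 2 * eAcross G S₁u {u} = G.degree u := by
    have h := cut_union_disjoint G S₁u {u}
      (Finset.disjoint_singleton_right.mpr hu1)
    have e1 : S₁u ∪ {u} = S₂u := by rw [hiu]; ext a; simp [or_comm]
    rw [e1, dA, d1u, cut_singleton] at h
    omega
  have hdegv : 2 * eAcross G S₂u {v} = G.degree v := by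
    have h := cut_union_disjoint G S₂u {v}
      (Finset.disjoint_singleton_right.mpr hvA)
    have e1 : S₂u ∪ {v} = S₂v := by rw [hB]; ext a; simp [or_comm]
    rw [e1, dB, dA, cut_singleton] at h
    omega
  rcases hxor with ⟨huS, hvS⟩ | ⟨huS, hvS⟩
  · -- u ∈ S, v ∉ S : show S = S₂u
    by_contra hne
    exfalso
    by_cases hZ : (S \ S₂u).Nonempty
    · -- uniform argument with B = S₂v
      have eSB : S ∩ S₂v = S ∩ S₂u := by
        rw [hB]; ext a
        simp only [Finset.mem_inter, Finset.mem_insert]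
        constructor
        · rintro ⟨h1, (rfl | h2)⟩
          · exact absurd h1 hvS
          · exact ⟨h1, h2⟩
        · rintro ⟨h1, h2⟩; exact ⟨h1, Or.inr h2⟩
      have eSdB : S \ S₂v = S \ S₂u := by
        rw [hB]; ext a
        simp only [Finset.mem_sdiff, Finset.mem_insert]
        constructor
        · rintro ⟨h1, h2⟩; exact ⟨h1, fun h => h2 (Or.inr h)⟩
        · rintro ⟨h1, h2⟩
          refine ⟨h1, fun h => ?_⟩
          rcases h with rfl | h
          exacts [hvS h1, h2 h]
      have eXY : (S ∩ S₂u) ∪ (S₂v \ S) = S₂v := by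
        ext a
        simp only [Finset.mem_union, Finset.mem_inter, Finset.mem_sdiff, hB,
          Finset.mem_insert]
        by_cases hav : a = v
        · subst hav; simp [hvS, hvA]
        · simp only [hav, false_or]; tauto
      have F1 := cut_submod G S S₂v
      rw [eSB, eSdB, dS, dB] at F1
      have F2 := cut_posimod G S S₂v
      rw [eSB, eSdB, dS, dB] at F2
      have F3 := cut_union_disjoint G (S ∩ S₂u) (S₂v \ S)
        (Finset.disjoint_left.mpr fun {a} ha hb =>
          (Finset.mem_sdiff.mp hb).2 (Finset.mem_inter.mp ha).1)
      rw [eXY, dB] at F3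
      have lbX : k ≤ (cutEdges G (S ∩ S₂u)).card :=
        lb _ ⟨u, Finset.mem_inter.mpr ⟨huS, huA⟩⟩
          (fun h => hrS (Finset.mem_inter.mp h).1)
      have lbU : k ≤ (cutEdges G (S ∪ S₂v)).card :=
        lb _ (hS.1.mono Finset.subset_union_left)
          (fun h => (Finset.mem_union.mp h).elim hrS hr2v)
      have lbZ : k ≤ (cutEdges G (S \ S₂u)).card :=
        lb _ hZ (fun h => hrS (Finset.mem_sdiff.mp h).1)
      have hvYv : v ∈ S₂v \ S :=
        Finset.mem_sdiff.mpr ⟨hB ▸ Finset.mem_insert_self v S₂u, hvS⟩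
      have lbYv : k ≤ (cutEdges G (S₂v \ S)).card :=
        lb _ ⟨v, hvYv⟩ (fun h => hr2v (Finset.mem_sdiff.mp h).1)
      -- disjointness facts
      have djAZ : Disjoint S₂u (S \ S₂u) :=
        Finset.disjoint_left.mpr fun {a} ha hb => (Finset.mem_sdiff.mp hb).2 ha
      have djAW : Disjoint S₂u (univ \ (S ∪ S₂v)) :=
        Finset.disjoint_left.mpr fun {a} ha hb =>
          (Finset.mem_sdiff.mp hb).2
            (Finset.mem_union_right _ (by rw [hB]; exact Finset.mem_insert_of_mem ha))
      have djZW : Disjoint (S \ S₂u) (univ \ (S ∪ S₂v)) :=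
        Finset.disjoint_left.mpr fun {a} ha hb =>
          (Finset.mem_sdiff.mp hb).2
            (Finset.mem_union_left _ (Finset.mem_sdiff.mp ha).1)
      have djXZ : Disjoint (S ∩ S₂u) (S \ S₂u) :=
        Finset.disjoint_left.mpr fun {a} ha hb =>
          (Finset.mem_sdiff.mp hb).2 (Finset.mem_inter.mp ha).2
      have djXW : Disjoint (S ∩ S₂u) (univ \ (S ∪ S₂v)) :=
        Finset.disjoint_left.mpr fun {a} ha hb =>
          (Finset.mem_sdiff.mp hb).2
            (Finset.mem_union_left _ (Finset.mem_inter.mp ha).1)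
      have split_v : (cutEdges G {v}).card
          = eAcross G {v} S₂u
            + (eAcross G {v} (S \ S₂u) + eAcross G {v} (univ \ (S ∪ S₂v))) := by
        apply cut_split3 G {v} _ _ _ _ djAZ djAW djZW
        ext a
        simp only [Finset.mem_sdiff, Finset.mem_univ, true_and,
          Finset.mem_singleton, Finset.mem_union, hB, Finset.mem_insert]
        by_cases hav : a = v
        · subst hav; simp [hvS, hvA]
        · simp only [hav, not_false_iff, true_iff]; tauto
      have split_Yv : (cutEdges G (S₂v \ S)).card
          = eAcross G (S₂v \ S) (S ∩ S₂u)
            + (eAcross G (S₂v \ S) (S \ S₂u)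
              + eAcross G (S₂v \ S) (univ \ (S ∪ S₂v))) := by
        apply cut_split3 G _ _ _ _ _ djXZ djXW djZW
        ext a
        simp only [Finset.mem_sdiff, Finset.mem_univ, true_and, Finset.mem_union,
          Finset.mem_inter, hB, Finset.mem_insert]
        by_cases hav : a = v
        · subst hav; simp [hvS, hvA]
        · simp only [hav, false_or]; tauto
      rw [cut_singleton] at split_v
      have s1 : eAcross G (S₂v \ S) (S ∩ S₂u) = eAcross G (S ∩ S₂u) (S₂v \ S) :=
        eAcross_symm G _ _
      have s2 : eAcross G (S₂v \ S) (S \ S₂u) = eAcross G (S \ S₂u) (S₂v \ S) :=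
        eAcross_symm G _ _
      have s3 : eAcross G {v} S₂u = eAcross G S₂u {v} := eAcross_symm G _ _
      have m1 : eAcross G {v} (S \ S₂u) ≤ eAcross G (S₂v \ S) (S \ S₂u) :=
        eAcross_mono G (Finset.singleton_subset_iff.mpr hvYv) Finset.Subset.rfl
      have m2 : eAcross G {v} (univ \ (S ∪ S₂v)) ≤ eAcross G (S₂v \ S) (univ \ (S ∪ S₂v)) :=
        eAcross_mono G (Finset.singleton_subset_iff.mpr hvYv) Finset.Subset.rfl
      omega
    · -- S ⊊ S₂u
      rw [Finset.not_nonempty_iff_eq_empty, Finset.sdiff_eq_empty_iff_subset] at hZ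
      have eU : S \ S₁u = {u} := by
        ext a
        simp only [Finset.mem_sdiff, Finset.mem_singleton]
        constructor
        · rintro ⟨h1, h2⟩
          rcases Finset.mem_insert.mp (hiu ▸ hZ h1) with h | h
          exacts [h, absurd h h2]
        · rintro rfl; exact ⟨huS, hu1⟩
      have hY : (S₁u \ S).Nonempty := by
        have hex : ∃ a ∈ S₂u, a ∉ S := by
          by_contra h
          push_neg at h
          exact hne (Finset.Subset.antisymm hZ (fun a ha => h a ha))
        obtain ⟨a, ha, has⟩ := hex
        refine ⟨a, Finset.mem_sdiff.mpr ⟨?_, has⟩⟩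
        rcases Finset.mem_insert.mp (hiu ▸ ha) with rfl | h
        · exact absurd huS has
        · exact h
      have F := cut_posimod G S S₁u
      rw [eU, cut_singleton, dS, d1u] at F
      have lbY : k ≤ (cutEdges G (S₁u \ S)).card :=
        lb _ hY (fun h => hr1u (Finset.mem_sdiff.mp h).1)
      omega
  · -- u ∉ S, v ∈ S : contradiction
    exfalso
    by_cases hX : (S ∩ S₂u).Nonempty
    · have F1 := cut_submod G S S₂u
      rw [dS, dA] at F1
      have F2 := cut_posimod G S S₂u
      rw [dS, dA] at F2
      have eA : (S ∩ S₂u) ∪ (S₂u \ S) = S₂u := by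
        ext a
        simp only [Finset.mem_union, Finset.mem_inter, Finset.mem_sdiff]
        tauto
      have F3 := cut_union_disjoint G (S ∩ S₂u) (S₂u \ S)
        (Finset.disjoint_left.mpr fun {a} ha hb =>
          (Finset.mem_sdiff.mp hb).2 (Finset.mem_inter.mp ha).1)
      rw [eA, dA] at F3
      have lbX : k ≤ (cutEdges G (S ∩ S₂u)).card :=
        lb _ hX (fun h => hrS (Finset.mem_inter.mp h).1)
      have lbU : k ≤ (cutEdges G (S ∪ S₂u)).card :=
        lb _ (hS.1.mono Finset.subset_union_left)
          (fun h => (Finset.mem_union.mp h).elim hrS hr2u)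
      have lbZ : k ≤ (cutEdges G (S \ S₂u)).card :=
        lb _ ⟨v, Finset.mem_sdiff.mpr ⟨hvS, hvA⟩⟩
          (fun h => hrS (Finset.mem_sdiff.mp h).1)
      have huY : u ∈ S₂u \ S := Finset.mem_sdiff.mpr ⟨huA, huS⟩
      have lbY : k ≤ (cutEdges G (S₂u \ S)).card :=
        lb _ ⟨u, huY⟩ (fun h => hr2u (Finset.mem_sdiff.mp h).1)
      -- disjointness
      have dj1Z : Disjoint S₁u (S \ S₂u) :=
        Finset.disjoint_left.mpr fun {a} ha hb =>
          (Finset.mem_sdiff.mp hb).2 (by rw [hiu]; exact Finset.mem_insert_of_mem ha)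
      have dj1W : Disjoint S₁u (univ \ (S ∪ S₂u)) :=
        Finset.disjoint_left.mpr fun {a} ha hb =>
          (Finset.mem_sdiff.mp hb).2
            (Finset.mem_union_right _ (by rw [hiu]; exact Finset.mem_insert_of_mem ha))
      have djZW : Disjoint (S \ S₂u) (univ \ (S ∪ S₂u)) :=
        Finset.disjoint_left.mpr fun {a} ha hb =>
          (Finset.mem_sdiff.mp hb).2
            (Finset.mem_union_left _ (Finset.mem_sdiff.mp ha).1)
      have djXZ : Disjoint (S ∩ S₂u) (S \ S₂u) :=
        Finset.disjoint_left.mpr fun {a} ha hb =>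
          (Finset.mem_sdiff.mp hb).2 (Finset.mem_inter.mp ha).2
      have djXW : Disjoint (S ∩ S₂u) (univ \ (S ∪ S₂u)) :=
        Finset.disjoint_left.mpr fun {a} ha hb =>
          (Finset.mem_sdiff.mp hb).2
            (Finset.mem_union_left _ (Finset.mem_inter.mp ha).1)
      have split_u : (cutEdges G {u}).card
          = eAcross G {u} S₁u
            + (eAcross G {u} (S \ S₂u) + eAcross G {u} (univ \ (S ∪ S₂u))) := by
        apply cut_split3 G {u} _ _ _ _ dj1Z dj1W djZW
        ext a
        simp only [Finset.mem_sdiff, Finset.mem_univ, true_and,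
          Finset.mem_singleton, Finset.mem_union, hiu, Finset.mem_insert]
        by_cases hau : a = u
        · subst hau; simp [huS, hu1]
        · simp only [hau, not_false_iff, true_iff, false_or]; tauto
      have split_Y : (cutEdges G (S₂u \ S)).card
          = eAcross G (S₂u \ S) (S ∩ S₂u)
            + (eAcross G (S₂u \ S) (S \ S₂u)
              + eAcross G (S₂u \ S) (univ \ (S ∪ S₂u))) := by
        apply cut_split3 G _ _ _ _ _ djXZ djXW djZW
        ext a
        simp only [Finset.mem_sdiff, Finset.mem_univ, true_and, Finset.mem_union,
          Finset.mem_inter]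
        tauto
      rw [cut_singleton] at split_u
      have s1 : eAcross G (S₂u \ S) (S ∩ S₂u) = eAcross G (S ∩ S₂u) (S₂u \ S) :=
        eAcross_symm G _ _
      have s2 : eAcross G (S₂u \ S) (S \ S₂u) = eAcross G (S \ S₂u) (S₂u \ S) :=
        eAcross_symm G _ _
      have s3 : eAcross G {u} S₁u = eAcross G S₁u {u} := eAcross_symm G _ _
      have m1 : eAcross G {u} (S \ S₂u) ≤ eAcross G (S₂u \ S) (S \ S₂u) :=
        eAcross_mono G (Finset.singleton_subset_iff.mpr huY) Finset.Subset.rfl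
      have m2 : eAcross G {u} (univ \ (S ∪ S₂u)) ≤ eAcross G (S₂u \ S) (univ \ (S ∪ S₂u)) :=
        eAcross_mono G (Finset.singleton_subset_iff.mpr huY) Finset.Subset.rfl
      omega
    · rw [Finset.not_nonempty_iff_eq_empty] at hX
      have dj : Disjoint S S₂u := Finset.disjoint_iff_inter_eq_empty.mpr hX
      have F := cut_union_disjoint G S S₂u dj
      rw [dS, dA] at F
      have lbU : k ≤ (cutEdges G (S ∪ S₂u)).card :=
        lb _ (hS.1.mono Finset.subset_union_left)
          (fun h => (Finset.mem_union.mp h).elim hrS hr2u)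
      have m : eAcross G {v} S₂u ≤ eAcross G S S₂u :=
        eAcross_mono G (Finset.singleton_subset_iff.mpr hvS) Finset.Subset.rfl
      have s3 : eAcross G {v} S₂u = eAcross G S₂u {v} := eAcross_symm G _ _
      omega
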